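/- Let K^! be a kernel on ℝ² and let Ψ = Σ_i δ_{(X_i,h_i)} be a point process on ℝ²×(0,∞) whose ground points are (X_i) and whose marks (h_i) are i.i.d. unit-mean exponential, independent of (X_i), such that for every nonnegative measurable f : ℝ²×(0,∞) → [0,∞] for which x ↦ −log ∫_0^∞ e^{−f(x,h)} e^{−h} dh satisfies conditions (a)–(c) with respect to K^!, E[exp(−Σ_i f(X_i,h_i))] = Σ_{n=0}^∞ ((−1)^n/n!) ∫_{(ℝ²)^n} det(K^!(x_i,x_j))_{1≤i,j≤n} Π_{i=1}^n (1 − ∫_0^∞ e^{−f(x_i,h)}e^{−h}dh) dx_1⋯dx_n. Fix r₀ > 0, s ≥ 0, P > 0 and a nonincreasing nonnegative path loss l(x) depending only on ‖x‖, let A be the event that no point X_i lies in the open ball B°(0,r₀) and assume P(A) > 0, and let I = Σ_i P h_i l(X_i) 1{‖X_i‖ ≥ r₀}. Assume that f(x,h) = sPh l(x)1{‖x‖ ≥ r₀} − log 1{‖x‖ ≥ r₀} satisfies the above conditions. Then E[e^{−sI} | A] = [Σ_{n=0}^∞ ((−1)^n/n!) ∫_{(ℝ²)^n} det(K^!(x_i,x_j))_{1≤i,j≤n}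 Π_{i=1}^n (1 − 1{‖x_i‖ ≥ r₀}/(1+sP l(x_i))) dx_1⋯dx_n] / [Σ_{n=0}^∞ ((−1)^n/n!) ∫_{(B(0,r₀))^n} det(K^!(x_i,x_j))_{1≤i,j≤n} dx_1⋯dx_n]. -/

import Mathlib

open MeasureTheory Measure Metric Filter ProbabilityTheory
open scoped ENNReal NNReal Real Topology BigOperators ComplexOrder

noncomputable section

abbrev E2 : Type := EuclideanSpace ℝ (Fin 2)

/-- `expNeg a = e^{-a}` for `a ∈ [0,∞]`, with `expNeg ∞ = 0`. -/
def expNeg (a : ℝ≥0∞) : ℝ := if a = ∞ then 0 else Real.exp (-a.toReal)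

/-- `negLog t = -log t ∈ [0,∞]` for `t ∈ [0,1]`, with `negLog 0 = ∞`. -/
def negLog (t : ℝ) : ℝ≥0∞ := if t = 0 then ∞ else ENNReal.ofReal (-Real.log t)

structure IsKernel (K : E2 → E2 → ℂ) : Prop where
  continuous : Continuous fun p : E2 × E2 => K p.1 p.2
  hermitian : ∀ x y : E2, K y x = starRingEnd ℂ (K x y)
  locSqInt : ∀ s : Set (E2 × E2), IsCompact s →
    IntegrableOn (fun p : E2 × E2 => ‖K p.1 p.2‖ ^ 2) s
  posSemidef : ∀ (n : ℕ) (x : Fin n → E2),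
    (Matrix.of fun i j : Fin n => K (x i) (x j)).PosSemidef

structure SatConds (K : E2 → E2 → ℂ) (f : E2 → ℝ≥0∞) : Prop where
  tendsto_zero : Tendsto f (Bornology.cobounded E2) (nhds 0)
  tail_tendsto_zero : Tendsto
    (fun r : ℝ => ∫⁻ x in (closedBall (0 : E2) r)ᶜ, ENNReal.ofReal (K x x).re * f x)
    atTop (nhds 0)
  finite_integral : ∫⁻ x : E2, ENNReal.ofReal ((K x x).re * (1 - expNeg (f x))) < ∞

def dppTerm (K : E2 → E2 → ℂ) (g : E2 → ℝ) (n : ℕ) : ℂ :=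
  ((-1 : ℂ) ^ n / n.factorial) *
    ∫ x : Fin n → E2,
      (Matrix.of fun i j : Fin n => K (x i) (x j)).det * ∏ i : Fin n, (g (x i) : ℂ)

/-- `∫_{(B(0,r))^n} det(K(x_i,x_j))_{1≤i,j≤n} dx_1⋯dx_n`. -/
def ballDetInt (K : E2 → E2 → ℂ) (r : ℝ) (n : ℕ) : ℂ :=
  ∫ x in Set.univ.pi fun _ : Fin n => closedBall (0 : E2) r,
    (Matrix.of fun i j : Fin n => K (x i) (x j)).det

/-- `∫_0^∞ e^{-f(x,h)} e^{-h} dh`, the average of `e^{-f(x,·)}` over a unit-mean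
exponential mark. -/
def markInt (f : E2 → ℝ → ℝ≥0∞) (x : E2) : ℝ :=
  ∫ t in Set.Ioi (0 : ℝ), expNeg (f x t) * Real.exp (-t)

/-- The marked point process `Σ_i δ_{(X_i,h_i)}` with unit-mean exponential marks
satisfies the marked DPP Laplace identity with kernel `K`. -/
def MarkedDPPLaplace {Ω : Type} [MeasurableSpace Ω] (μ : Measure Ω)
    {I : Type} [Countable I] (X : I → Ω → E2) (h : I → Ω → ℝ)
    (K : E2 → E2 → ℂ) : Prop :=
  ∀ f : E2 → ℝ → ℝ≥0∞, Measurable (fun q : E2 × ℝ => f q.1 q.2) →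
    SatConds K (fun x => negLog (markInt f x)) →
    ((∫ ω, expNeg (∑' i : I, f (X i ω) (h i ω)) ∂μ : ℝ) : ℂ) =
      ∑' n : ℕ, dppTerm K (fun x => 1 - markInt f x) n


lemma expNeg_top : expNeg ⊤ = 0 := by simp [expNeg]

lemma expNeg_zero : expNeg 0 = 1 := by simp [expNeg]

lemma expNeg_ofReal {a : ℝ} (ha : 0 ≤ a) : expNeg (ENNReal.ofReal a) = Real.exp (-a) := by
  simp [expNeg, ENNReal.toReal_ofReal ha]

lemma expNeg_nonneg (a : ℝ≥0∞) : 0 ≤ expNeg a := by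
  unfold expNeg; split
  · exact le_refl 0
  · exact (Real.exp_pos _).le

lemma expNeg_le_one (a : ℝ≥0∞) : expNeg a ≤ 1 := by
  unfold expNeg; split
  · norm_num
  · exact Real.exp_le_one_iff.mpr (neg_nonpos.mpr ENNReal.toReal_nonneg)

lemma expNeg_antitone : Antitone expNeg := by
  intro a b hab
  by_cases hb : b = ⊤
  · rw [hb, expNeg_top]; exact expNeg_nonneg a
  · have ha : a ≠ ⊤ := fun hc => hb (top_le_iff.mp (hc ▸ hab))
    simp only [expNeg, if_neg hb, if_neg ha]
    exact Real.exp_le_exp.mpr (neg_le_neg (ENNReal.toReal_mono hb hab))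

lemma integral_exp_neg_mul_Ioi_aux {b : ℝ} (hb : 0 < b) :
    ∫ t in Set.Ioi (0 : ℝ), Real.exp (-(b * t)) = b⁻¹ := by
  have := integral_comp_mul_left_Ioi (fun x => Real.exp (-x)) 0 hb
  simp only [mul_zero] at this
  rw [this, integral_exp_neg_Ioi_zero, smul_eq_mul, mul_one]

lemma markInt_f1 (r₀ s P : ℝ) (hs : 0 ≤ s) (hP : 0 < P)
    (l : E2 → ℝ) (hl : ∀ x, 0 ≤ l x) (x : E2) :
    markInt (fun x t => if r₀ ≤ ‖x‖ then ENNReal.ofReal (s * P * t * l x) else ∞) x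
      = if r₀ ≤ ‖x‖ then (1 + s * P * l x)⁻¹ else 0 := by
  unfold markInt
  by_cases hx : r₀ ≤ ‖x‖
  · rw [if_pos hx]
    have hc : 0 ≤ s * P * l x := mul_nonneg (mul_nonneg hs hP.le) (hl x)
    have h1 : Set.EqOn
        (fun t => expNeg ((fun x t => if r₀ ≤ ‖x‖ then
            ENNReal.ofReal (s * P * t * l x) else ∞) x t) * Real.exp (-t))
        (fun t => Real.exp (-((1 + s * P * l x) * t))) (Set.Ioi (0 : ℝ)) := by
      intro t ht
      have ht' : (0 : ℝ) < t := ht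
      have h0 : 0 ≤ s * P * t * l x :=
        mul_nonneg (mul_nonneg (mul_nonneg hs hP.le) ht'.le) (hl x)
      simp only [if_pos hx, expNeg_ofReal h0, ← Real.exp_add]
      congr 1; ring
    rw [setIntegral_congr_fun measurableSet_Ioi h1,
      integral_exp_neg_mul_Ioi_aux (by linarith : (0:ℝ) < 1 + s * P * l x)]
  · rw [if_neg hx]
    have h1 : Set.EqOn
        (fun t => expNeg ((fun x t => if r₀ ≤ ‖x‖ then
            ENNReal.ofReal (s * P * t * l x) else ∞) x t) * Real.exp (-t))
        (fun _ => (0 : ℝ)) (Set.Ioi (0 : ℝ)) := by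
      intro t _
      simp only [if_neg hx, expNeg_top, zero_mul]
    rw [setIntegral_congr_fun measurableSet_Ioi h1, integral_zero]

lemma markInt_f0 (r₀ : ℝ) (x : E2) :
    markInt (fun x (_ : ℝ) => if r₀ ≤ ‖x‖ then (0 : ℝ≥0∞) else ∞) x
      = if r₀ ≤ ‖x‖ then (1 : ℝ) else 0 := by
  unfold markInt
  by_cases hx : r₀ ≤ ‖x‖
  · simp only [if_pos hx, expNeg_zero, one_mul, integral_exp_neg_Ioi_zero]
  · simp only [if_neg hx, expNeg_top, zero_mul, integral_zero]

/-- Conditional Laplace transform of the interference: given that no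
point lies in the open ball `B°(0,r₀)`,
`E[e^{-sI} | A] = [Σ_n ((-1)^n/n!) ∫_{(ℝ²)^n} det(K^!) ∏ (1 − 1{‖x_i‖≥r₀}/(1+sP l(x_i))) dx]
  / [Σ_n ((-1)^n/n!) ∫_{B(0,r₀)^n} det(K^!) dx]`. -/
theorem stmt_9 {Ω : Type} [MeasurableSpace Ω] (μ : Measure Ω) [IsProbabilityMeasure μ]
    (K' : E2 → E2 → ℂ) (hK' : IsKernel K')
    (I : Type) [Countable I]
    (X : I → Ω → E2) (h : I → Ω → ℝ)
    (hXmeas : ∀ i, Measurable (X i)) (hhmeas : ∀ i, Measurable (h i))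
    (hiid : iIndepFun h μ)
    (hlaw : ∀ i, Measure.map (h i) μ = expMeasure 1)
    (hindep : IndepFun (fun ω (i : I) => X i ω) (fun ω (i : I) => h i ω) μ)
    (hLaplace : MarkedDPPLaplace μ X h K')
    (r₀ s P : ℝ) (hr₀ : 0 < r₀) (hs : 0 ≤ s) (hP : 0 < P)
    (l : E2 → ℝ) (hlmeas : Measurable l) (hlnonneg : ∀ x, 0 ≤ l x)
    (hlrad : ∀ x y : E2, ‖x‖ ≤ ‖y‖ → l y ≤ l x)
    (hA : 0 < μ {ω | ∀ i : I, X i ω ∉ ball (0 : E2) r₀})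
    (hf₀ : SatConds K' fun x =>
      negLog (markInt (fun x t =>
        if r₀ ≤ ‖x‖ then ENNReal.ofReal (s * P * t * l x) else ∞) x)) :
    (((∫ ω in {ω | ∀ i : I, X i ω ∉ ball (0 : E2) r₀},
          expNeg (ENNReal.ofReal s *
            ∑' i : I,
              ENNReal.ofReal (if r₀ ≤ ‖X i ω‖ then P * h i ω * l (X i ω) else 0)) ∂μ) /
        (μ {ω | ∀ i : I, X i ω ∉ ball (0 : E2) r₀}).toReal : ℝ) : ℂ) =
      (∑' n : ℕ, dppTerm K'
          (fun x => 1 - (if r₀ ≤ ‖x‖ then (1 : ℝ) else 0) / (1 + s * P * l x)) n) /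
        ∑' n : ℕ, ((-1 : ℂ) ^ n / n.factorial) * ballDetInt K' r₀ n := by
  set A : Set Ω := {ω | ∀ i : I, X i ω ∉ ball (0 : E2) r₀} with hAdef
  have hAm : MeasurableSet A := by
    have : A = ⋂ i : I, (X i) ⁻¹' (ball (0 : E2) r₀)ᶜ := by
      ext ω; simp [hAdef, Set.mem_iInter]
    rw [this]
    exact MeasurableSet.iInter fun i => (hXmeas i) measurableSet_ball.compl
  have hAmem : ∀ ω, ω ∈ A ↔ ∀ i, r₀ ≤ ‖X i ω‖ := by
    intro ω
    simp [hAdef, mem_ball_zero_iff, not_lt]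
  -- measurability of the two mark functions
  have hm1 : Measurable (fun q : E2 × ℝ =>
      (fun x t => if r₀ ≤ ‖x‖ then ENNReal.ofReal (s * P * t * l x) else ∞) q.1 q.2) := by
    apply Measurable.ite (measurableSet_le measurable_const measurable_fst.norm)
    · exact ENNReal.measurable_ofReal.comp
        ((measurable_const.mul measurable_snd).mul (hlmeas.comp measurable_fst))
    · exact measurable_const
  have hm0 : Measurable (fun q : E2 × ℝ =>
      (fun x (_ : ℝ) => if r₀ ≤ ‖x‖ then (0 : ℝ≥0∞) else ∞) q.1 q.2) := by
    apply Measurable.ite (measurableSet_le measurable_const measurable_fst.norm)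
    · exact measurable_const
    · exact measurable_const
  -- diagonal of the kernel is nonneg
  have hKdiag : ∀ x : E2, 0 ≤ (K' x x).re := by
    intro x
    have h2 := (hK'.posSemidef 1 fun _ => x).dotProduct_mulVec_nonneg fun _ => 1
    simp only [dotProduct, Matrix.mulVec, Fin.sum_univ_one, Matrix.of_apply,
      Pi.star_apply, star_one, one_mul, mul_one] at h2
    simpa using (Complex.le_def.mp h2).1
  -- pointwise comparison of the negLog-markInt functions
  have hg0le : ∀ x : E2,
      negLog (markInt (fun x (_ : ℝ) => if r₀ ≤ ‖x‖ then (0 : ℝ≥0∞) else ∞) x)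
        ≤ negLog (markInt (fun x t =>
            if r₀ ≤ ‖x‖ then ENNReal.ofReal (s * P * t * l x) else ∞) x) := by
    intro x
    rw [markInt_f0]
    by_cases hx : r₀ ≤ ‖x‖
    · rw [if_pos hx]
      simp [negLog]
    · rw [markInt_f1 r₀ s P hs hP l hlnonneg, if_neg hx, if_neg hx]
  -- conditions for the denominator function
  have hsat0 : SatConds K' fun x =>
      negLog (markInt (fun x (_ : ℝ) => if r₀ ≤ ‖x‖ then (0 : ℝ≥0∞) else ∞) x) := by
    constructor
    · exact tendsto_of_tendsto_of_tendsto_of_le_of_le tendsto_const_nhds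
        hf₀.tendsto_zero (fun x => zero_le) hg0le
    · refine tendsto_of_tendsto_of_tendsto_of_le_of_le tendsto_const_nhds
        hf₀.tail_tendsto_zero (fun r => zero_le) ?_
      intro r
      exact lintegral_mono fun x => mul_le_mul_right (hg0le x) _
    · refine lt_of_le_of_lt (lintegral_mono fun x => ?_) hf₀.finite_integral
      refine ENNReal.ofReal_le_ofReal (mul_le_mul_of_nonneg_left ?_ (hKdiag x))
      exact sub_le_sub_left (expNeg_antitone (hg0le x)) 1
  have hnum := hLaplace _ hm1 hf₀
  have hden := hLaplace _ hm0 hsat0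
  -- rewrite the numerator integral
  have hnum_int : (∫ ω, expNeg (∑' i : I,
        (fun x t => if r₀ ≤ ‖x‖ then ENNReal.ofReal (s * P * t * l x) else ∞)
          (X i ω) (h i ω)) ∂μ)
      = ∫ ω in A, expNeg (ENNReal.ofReal s *
          ∑' i : I, ENNReal.ofReal (if r₀ ≤ ‖X i ω‖ then P * h i ω * l (X i ω) else 0)) ∂μ := by
    rw [← integral_indicator hAm]
    congr 1
    funext ω
    by_cases hω : ω ∈ A
    · rw [Set.indicator_of_mem hω]
      have hall := (hAmem ω).mp hω
      congr 1
      rw [← ENNReal.tsum_mul_left]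
      refine tsum_congr fun i => ?_
      simp only [if_pos (hall i)]
      rw [← ENNReal.ofReal_mul hs]
      congr 1; ring
    · rw [Set.indicator_of_notMem hω]
      have : ∃ i, X i ω ∈ ball (0 : E2) r₀ := by
        by_contra hc
        push_neg at hc
        exact hω hc
      obtain ⟨i, hi⟩ := this
      have hni : ¬ r₀ ≤ ‖X i ω‖ := not_le.mpr (mem_ball_zero_iff.mp hi)
      have htop : (∑' i : I,
          (fun x t => if r₀ ≤ ‖x‖ then ENNReal.ofReal (s * P * t * l x) else ∞)
            (X i ω) (h i ω)) = ⊤ := by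
        refine eq_top_iff.mpr ?_
        calc (⊤ : ℝ≥0∞) = (fun x t => if r₀ ≤ ‖x‖ then ENNReal.ofReal (s * P * t * l x)
              else ∞) (X i ω) (h i ω) := by simp [if_neg hni]
          _ ≤ _ := ENNReal.le_tsum i
      rw [htop, expNeg_top]
  -- rewrite the denominator integral
  have hden_int : (∫ ω, expNeg (∑' i : I,
        (fun x (_ : ℝ) => if r₀ ≤ ‖x‖ then (0 : ℝ≥0∞) else ∞) (X i ω) (h i ω)) ∂μ)
      = (μ A).toReal := by
    rw [← measureReal_def, ← integral_indicator_one hAm]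
    congr 1
    funext ω
    by_cases hω : ω ∈ A
    · rw [Set.indicator_of_mem hω]
      have hall := (hAmem ω).mp hω
      have h0 : (∑' i : I,
          (fun x (_ : ℝ) => if r₀ ≤ ‖x‖ then (0 : ℝ≥0∞) else ∞) (X i ω) (h i ω)) = 0 := by
        exact ENNReal.tsum_eq_zero.mpr fun i => by simp [if_pos (hall i)]
      rw [h0, expNeg_zero]; rfl
    · rw [Set.indicator_of_notMem hω]
      have : ∃ i, X i ω ∈ ball (0 : E2) r₀ := by
        by_contra hc; push_neg at hc; exact hω hc
      obtain ⟨i, hi⟩ := this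
      have hni : ¬ r₀ ≤ ‖X i ω‖ := not_le.mpr (mem_ball_zero_iff.mp hi)
      have htop : (∑' i : I,
          (fun x (_ : ℝ) => if r₀ ≤ ‖x‖ then (0 : ℝ≥0∞) else ∞) (X i ω) (h i ω)) = ⊤ := by
        refine eq_top_iff.mpr ?_
        calc (⊤ : ℝ≥0∞) = (fun x (_ : ℝ) => if r₀ ≤ ‖x‖ then (0 : ℝ≥0∞) else ∞)
              (X i ω) (h i ω) := by simp [if_neg hni]
          _ ≤ _ := ENNReal.le_tsum i
      rw [htop, expNeg_top]
  -- identify the numerator dpp terms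
  have hg1 : (fun x : E2 => 1 - markInt (fun x t =>
        if r₀ ≤ ‖x‖ then ENNReal.ofReal (s * P * t * l x) else ∞) x)
      = fun x : E2 => 1 - (if r₀ ≤ ‖x‖ then (1 : ℝ) else 0) / (1 + s * P * l x) := by
    funext x
    rw [markInt_f1 r₀ s P hs hP l hlnonneg]
    by_cases hx : r₀ ≤ ‖x‖
    · rw [if_pos hx, if_pos hx, one_div]
    · rw [if_neg hx, if_neg hx, zero_div]
  -- identify the denominator dpp terms
  have hball : ∀ n : ℕ, dppTerm K' (fun x => 1 - markInt
        (fun x (_ : ℝ) => if r₀ ≤ ‖x‖ then (0 : ℝ≥0∞) else ∞) x) n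
      = ((-1 : ℂ) ^ n / n.factorial) * ballDetInt K' r₀ n := by
    intro n
    unfold dppTerm ballDetInt
    congr 1
    have h1 : (fun x : Fin n → E2 =>
          (Matrix.of fun i j : Fin n => K' (x i) (x j)).det *
            ∏ i : Fin n, ((1 - markInt
              (fun x (_ : ℝ) => if r₀ ≤ ‖x‖ then (0 : ℝ≥0∞) else ∞) (x i) : ℝ) : ℂ))
        = (Set.univ.pi fun _ : Fin n => ball (0 : E2) r₀).indicator
            (fun x => (Matrix.of fun i j : Fin n => K' (x i) (x j)).det) := by
      funext x
      by_cases hx : x ∈ Set.univ.pi fun _ : Fin n => ball (0 : E2) r₀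
      · rw [Set.indicator_of_mem hx]
        have hmem : ∀ i, ¬ r₀ ≤ ‖x i‖ := fun i =>
          not_le.mpr (mem_ball_zero_iff.mp (hx i trivial))
        have hprod : (∏ i : Fin n, ((1 - markInt
            (fun x (_ : ℝ) => if r₀ ≤ ‖x‖ then (0 : ℝ≥0∞) else ∞) (x i) : ℝ) : ℂ)) = 1 := by
          refine Finset.prod_eq_one fun i _ => ?_
          rw [markInt_f0, if_neg (hmem i)]
          norm_num
        rw [hprod, mul_one]
      · rw [Set.indicator_of_notMem hx]
        have : ∃ i, x i ∉ ball (0 : E2) r₀ := by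
          by_contra hc; push_neg at hc
          exact hx fun i _ => hc i
        obtain ⟨i, hi⟩ := this
        have hge : r₀ ≤ ‖x i‖ := not_lt.mp fun hc => hi (mem_ball_zero_iff.mpr hc)
        have hz : ((1 - markInt
            (fun x (_ : ℝ) => if r₀ ≤ ‖x‖ then (0 : ℝ≥0∞) else ∞) (x i) : ℝ) : ℂ) = 0 := by
          rw [markInt_f0, if_pos hge]
          norm_num
        rw [Finset.prod_eq_zero (Finset.mem_univ i) hz, mul_zero]
    rw [h1, integral_indicator (MeasurableSet.univ_pi fun _ => measurableSet_ball)]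
    refine setIntegral_congr_set ?_
    rw [MeasureTheory.ae_eq_set]
    constructor
    · rw [Set.diff_eq_empty.mpr (Set.pi_mono fun i _ => ball_subset_closedBall)]
      exact measure_empty
    · have hsub : ((Set.univ.pi fun _ : Fin n => closedBall (0 : E2) r₀) \ (Set.univ.pi fun _ : Fin n => ball (0 : E2) r₀))
          ⊆ ⋃ i : Fin n, Function.eval i ⁻¹' (sphere (0 : E2) r₀) := by
        rintro x ⟨hx1, hx2⟩
        have : ∃ i, x i ∉ ball (0 : E2) r₀ := by
          by_contra hc; push_neg at hc
          exact hx2 fun i _ => hc i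
        obtain ⟨i, hi⟩ := this
        refine Set.mem_iUnion.mpr ⟨i, ?_⟩
        have h1' : ‖x i‖ ≤ r₀ := mem_closedBall_zero_iff.mp (hx1 i trivial)
        have h2' : r₀ ≤ ‖x i‖ := not_lt.mp fun hc => hi (mem_ball_zero_iff.mpr hc)
        simpa [Function.eval, mem_sphere_zero_iff_norm] using le_antisymm h1' h2'
      refine measure_mono_null hsub (measure_iUnion_null fun i => ?_)
      rw [volume_pi]
      exact MeasureTheory.Measure.pi_eval_preimage_null _
        (Measure.addHaar_sphere (μ := (volume : Measure E2)) (0 : E2) r₀)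
  -- assemble
  rw [hnum_int] at hnum
  rw [hden_int] at hden
  rw [hg1] at hnum
  have hden' : (((μ A).toReal : ℝ) : ℂ)
      = ∑' n : ℕ, ((-1 : ℂ) ^ n / n.factorial) * ballDetInt K' r₀ n :=
    hden.trans (tsum_congr hball)
  rw [Complex.ofReal_div, hnum, hden']
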